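/- Let S be a set of points in a finite projective plane of order n such that through each point of S there are at least s lines meeting S in exactly t points (s, t ≥ 1, st ≤ n). Then s|S|² − (2st(n+1) − (s+t)n)|S| − t(n − st)(n² + n + 1) ≤ 0; in particular |S| is at most the larger root of s·x² − (2st(n+1) − (s+t)n)·x − t(n − st)(n²+n+1) = 0. -/

import Mathlib

open Configuration Finset

lemma quad_root_bound (a x b c : ℝ) (ha : 0 < a) (hc : 0 ≤ c)
    (h : a * x ^ 2 - b * x - c ≤ 0) :
    x ≤ (b + Real.sqrt (b ^ 2 + 4 * a * c)) / (2 * a) := by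
  have hD : 0 ≤ b ^ 2 + 4 * a * c := by positivity
  have hsq := Real.sq_sqrt hD
  have hnn := Real.sqrt_nonneg (b ^ 2 + 4 * a * c)
  rw [le_div_iff₀ (by positivity)]
  nlinarith [sq_nonneg (2 * a * x - b - Real.sqrt (b ^ 2 + 4 * a * c))]

set_option maxHeartbeats 1000000 in
theorem s_fold_t_secant_bound (P L : Type*) [Membership P L]
    [Fintype P] [Fintype L] [ProjectivePlane P L]
    (n s t : ℕ) (hn : ProjectivePlane.order P L = n) (hs : 1 ≤ s) (ht : 1 ≤ t)
    (hst : s * t ≤ n)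
    (S : Finset P)
    (hS : ∀ p ∈ S, s ≤ Nat.card {ℓ : L // p ∈ ℓ ∧ Nat.card {q : P // q ∈ S ∧ q ∈ ℓ} = t}) :
    (s : ℝ) * (S.card : ℝ) ^ 2
        - (2 * s * t * ((n : ℝ) + 1) - ((s : ℝ) + t) * n) * S.card
        - t * ((n : ℝ) - s * t) * ((n : ℝ) ^ 2 + n + 1) ≤ 0 ∧
    (S.card : ℝ) ≤ ((2 * s * t * ((n : ℝ) + 1) - ((s : ℝ) + t) * n)
        + Real.sqrt ((2 * s * t * ((n : ℝ) + 1) - ((s : ℝ) + t) * n) ^ 2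
            + 4 * s * (t * ((n : ℝ) - s * t) * ((n : ℝ) ^ 2 + n + 1)))) / (2 * s) := by
  classical
  have hstR : (s : ℝ) * t ≤ (n : ℝ) := by exact_mod_cast hst
  have hCnn : (0:ℝ) ≤ (t : ℝ) * ((n : ℝ) - s * t) * ((n : ℝ) ^ 2 + n + 1) := by
    apply mul_nonneg (mul_nonneg (by positivity) (by linarith)) (by positivity)
  have hmain : (s : ℝ) * (S.card : ℝ) ^ 2
      - (2 * s * t * ((n : ℝ) + 1) - ((s : ℝ) + t) * n) * S.card
      - t * ((n : ℝ) - s * t) * ((n : ℝ) ^ 2 + n + 1) ≤ 0 := by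
    rcases Nat.eq_zero_or_pos S.card with hk0 | hkpos
    · rw [hk0]; push_cast; linarith
    · classical
        set k := S.card with hk
        have hptc : ∀ ℓ : L, (univ.filter fun x : P => x ∈ ℓ).card = n + 1 := by
          intro ℓ
          have h := ProjectivePlane.pointCount_eq P ℓ
          rwa [pointCount, Nat.card_eq_fintype_card, Fintype.card_subtype, hn] at h
        have hcardP : Fintype.card P = n ^ 2 + n + 1 := by
          rw [ProjectivePlane.card_points P L, hn]
        have hS' : ∀ p ∈ S, s ≤ (univ.filter fun ℓ : L =>
            p ∈ ℓ ∧ (S.filter fun q => q ∈ ℓ).card = t).card := by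
          intro p hp
          have h1 := hS p hp
          have h2 : ∀ ℓ : L, Nat.card {q : P // q ∈ S ∧ q ∈ ℓ} = (S.filter fun q => q ∈ ℓ).card := by
            intro ℓ
            rw [Nat.card_eq_fintype_card, Fintype.card_subtype]
            congr 1
            ext q
            simp
          rw [Nat.card_eq_fintype_card, Fintype.card_subtype] at h1
          simpa only [h2] using h1
        have hBex : ∀ p : P, ∃ Bp : Finset L,
            Bp ⊆ (univ.filter fun ℓ : L => p ∈ ℓ ∧ (S.filter fun q => q ∈ ℓ).card = t) ∧
            (p ∈ S → Bp.card = s) := by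
          intro p
          by_cases hp : p ∈ S
          · obtain ⟨Bp, h1, h2⟩ := Finset.exists_subset_card_eq (hS' p hp)
            exact ⟨Bp, h1, fun _ => h2⟩
          · exact ⟨∅, empty_subset _, fun h => absurd h hp⟩
        choose B hBsub hBcard using hBex
        have hBmem : ∀ p : P, ∀ ℓ ∈ B p, p ∈ ℓ ∧ (S.filter fun q => q ∈ ℓ).card = t := by
          intro p ℓ hℓ
          simpa using hBsub p hℓ
        set T : Finset ((_ : P) × L) := S.sigma (fun p => B p) with hT
        have hTmem : ∀ q ∈ T, q.1 ∈ S ∧ q.1 ∈ q.2 ∧ (S.filter fun x => x ∈ q.2).card = t := by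
          intro q hq
          rw [hT, mem_sigma] at hq
          exact ⟨hq.1, (hBmem q.1 q.2 hq.2).1, (hBmem q.1 q.2 hq.2).2⟩
        have hTcard : T.card = s * k := by
          rw [hT, Finset.card_sigma,
            Finset.sum_congr rfl (fun p hp => hBcard p hp), Finset.sum_const, smul_eq_mul, mul_comm]
        set w : P → ℕ := fun x => ∑ q ∈ T, if x ∈ q.2 then 1 else 0 with hw
        -- total incidence
        have hw1 : ∑ x : P, w x = s * k * (n + 1) := by
          rw [hw, Finset.sum_comm]
          have h : ∀ q ∈ T, (∑ x : P, if x ∈ q.2 then (1:ℕ) else 0) = n + 1 := by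
            intro q _
            rw [Finset.sum_boole]
            simpa using hptc q.2
          rw [Finset.sum_congr rfl h, Finset.sum_const, smul_eq_mul, hTcard]
        -- incidences inside S
        have hw2 : ∑ x ∈ S, w x = s * k * t := by
          rw [hw, Finset.sum_comm]
          have h : ∀ q ∈ T, (∑ x ∈ S, if x ∈ q.2 then (1:ℕ) else 0) = t := by
            intro q hq
            rw [Finset.sum_boole]
            simpa using (hTmem q hq).2.2
          rw [Finset.sum_congr rfl h, Finset.sum_const, smul_eq_mul, hTcard]
        -- sum of squares
        have hsum3 : ∑ x : P, w x ^ 2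
            = ∑ q ∈ T, ∑ q' ∈ T, (univ.filter fun x : P => x ∈ q.2 ∧ x ∈ q'.2).card := by
          have hww : ∀ x : P, w x ^ 2 = ∑ q ∈ T, ∑ q' ∈ T,
              (if x ∈ q.2 ∧ x ∈ q'.2 then (1:ℕ) else 0) := by
            intro x
            rw [hw, sq, Finset.sum_mul_sum]
            refine Finset.sum_congr rfl fun q _ => Finset.sum_congr rfl fun q' _ => ?_
            by_cases h1 : x ∈ q.2 <;> by_cases h2 : x ∈ q'.2 <;> simp [h1, h2]
          simp_rw [hww]
          rw [Finset.sum_comm]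
          refine Finset.sum_congr rfl fun q _ => ?_
          rw [Finset.sum_comm]
          refine Finset.sum_congr rfl fun q' _ => ?_
          rw [Finset.sum_boole]
          simp
        have hcap : ∀ q q' : (_ : P) × L,
            (univ.filter fun x : P => x ∈ q.2 ∧ x ∈ q'.2).card ≤ if q.2 = q'.2 then n + 1 else 1 := by
          intro q q'
          by_cases h : q.2 = q'.2
          · rw [if_pos h, ← h]
            have he : (univ.filter fun x : P => x ∈ q.2 ∧ x ∈ q.2)
                = univ.filter fun x : P => x ∈ q.2 := by
              simp
            rw [he, hptc]
          · rw [if_neg h, Finset.card_le_one]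
            intro a ha b hb
            simp only [mem_filter, mem_univ, true_and] at ha hb
            obtain ⟨x, -, hx⟩ := HasPoints.existsUnique_point P L q.2 q'.2 h
            exact (hx a ha).trans (hx b hb).symm
        have hE : (∑ q ∈ T, ∑ q' ∈ T, if q.2 = q'.2 then (1:ℕ) else 0) ≤ s * k * t := by
          have h1 : ∀ q ∈ T, (∑ q' ∈ T, if q.2 = q'.2 then (1:ℕ) else 0) ≤ t := by
            intro q hq
            rw [Finset.sum_boole]
            have hle : (T.filter fun q' => q.2 = q'.2).card ≤ (S.filter fun x => x ∈ q.2).card := by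
              apply Finset.card_le_card_of_injOn (fun q' => q'.1)
              · intro q' hq'
                rw [mem_coe, mem_filter] at hq'
                have h2 := hTmem q' hq'.1
                rw [mem_coe, mem_filter]
                exact ⟨h2.1, hq'.2 ▸ h2.2.1⟩
              · intro q1 h1 q2 h2 hf
                simp only [coe_filter, Set.mem_setOf_eq] at h1 h2
                exact Sigma.ext hf (heq_of_eq (h1.2.symm.trans h2.2))
            calc ((T.filter fun q' => q.2 = q'.2).card : ℕ) ≤ (S.filter fun x => x ∈ q.2).card := hle
              _ = t := (hTmem q hq).2.2
          calc (∑ q ∈ T, ∑ q' ∈ T, if q.2 = q'.2 then (1:ℕ) else 0) ≤ ∑ _q ∈ T, t :=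
                Finset.sum_le_sum h1
            _ = s * k * t := by rw [Finset.sum_const, smul_eq_mul, hTcard]
        have hw3 : ∑ x : P, w x ^ 2 ≤ s * k * (s * k) + n * (s * k * t) := by
          rw [hsum3]
          calc (∑ q ∈ T, ∑ q' ∈ T, (univ.filter fun x : P => x ∈ q.2 ∧ x ∈ q'.2).card)
              ≤ ∑ q ∈ T, ∑ q' ∈ T, (if q.2 = q'.2 then n + 1 else 1) :=
                Finset.sum_le_sum fun q _ => Finset.sum_le_sum fun q' _ => hcap q q'
            _ = ∑ q ∈ T, ∑ q' ∈ T, (1 + n * if q.2 = q'.2 then 1 else 0) := by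
                refine Finset.sum_congr rfl fun q _ => Finset.sum_congr rfl fun q' _ => ?_
                by_cases h : q.2 = q'.2 <;> simp [h, Nat.add_comm]
            _ = s * k * (s * k) + n * ∑ q ∈ T, ∑ q' ∈ T, (if q.2 = q'.2 then 1 else 0) := by
                simp only [Finset.sum_add_distrib, ← Finset.mul_sum, Finset.sum_const, smul_eq_mul,
                  mul_one, hTcard]
                ring
            _ ≤ s * k * (s * k) + n * (s * k * t) := by
                exact Nat.add_le_add_left (Nat.mul_le_mul_left n hE) _
        -- S cannot be all points
        have htn : t ≤ n := le_trans (Nat.le_mul_of_pos_left t hs) hst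
        have hkleN : k ≤ n ^ 2 + n + 1 := hcardP ▸ Finset.card_le_univ S
        have hkN : k < n ^ 2 + n + 1 := by
          rcases lt_or_eq_of_le hkleN with h | h
          · exact h
          · exfalso
            have hcc : Sᶜ = (∅ : Finset P) := by
              rw [← Finset.card_eq_zero, Finset.card_compl, hcardP, ← hk, h, Nat.sub_self]
            have hsp := Finset.sum_add_sum_compl S w
            rw [hw2, hw1, hcc, Finset.sum_empty] at hsp
            have hlt : s * k * t < s * k * (n + 1) :=
              mul_lt_mul_of_pos_left (by omega : t < n + 1) (Nat.mul_pos hs hkpos)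
            linarith
        -- move to the reals
        have rw1 : ∑ x : P, (w x : ℝ) = (s : ℝ) * k * (n + 1) := by
          rw [← Nat.cast_sum, hw1]; push_cast; ring
        have rw2 : ∑ x ∈ S, (w x : ℝ) = (s : ℝ) * k * t := by
          rw [← Nat.cast_sum, hw2]; push_cast; ring
        have rwc : ∑ x ∈ Sᶜ, (w x : ℝ) = (s : ℝ) * k * (n + 1) - (s : ℝ) * k * t := by
          have hsp := Finset.sum_add_sum_compl S (fun x => (w x : ℝ))
          rw [rw2, rw1] at hsp
          linarith
        have rw3 : ∑ x : P, (w x : ℝ) ^ 2 ≤ (s : ℝ) * k * ((s : ℝ) * k) + n * ((s : ℝ) * k * t) := by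
          calc ∑ x : P, (w x : ℝ) ^ 2 = ((∑ x : P, w x ^ 2 : ℕ) : ℝ) := by push_cast; ring
            _ ≤ _ := by exact_mod_cast hw3
        have hccR : ((Sᶜ.card : ℕ) : ℝ) = ((n : ℝ) ^ 2 + n + 1) - k := by
          rw [Finset.card_compl, hcardP, ← hk, Nat.cast_sub hkleN]
          push_cast; ring
        have cs1 : ((s : ℝ) * k * t) ^ 2 ≤ (k : ℝ) * ∑ x ∈ S, (w x : ℝ) ^ 2 := by
          have h := sq_sum_le_card_mul_sum_sq (s := S) (f := fun x => (w x : ℝ))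
          rw [rw2, ← hk] at h
          exact h
        have cs2 : ((s : ℝ) * k * (n + 1) - (s : ℝ) * k * t) ^ 2
            ≤ (((n : ℝ) ^ 2 + n + 1) - k) * ∑ x ∈ Sᶜ, (w x : ℝ) ^ 2 := by
          have h := sq_sum_le_card_mul_sum_sq (s := Sᶜ) (f := fun x => (w x : ℝ))
          rw [rwc, hccR] at h
          exact h
        have e3 : ∑ x ∈ S, (w x : ℝ) ^ 2 + ∑ x ∈ Sᶜ, (w x : ℝ) ^ 2
            ≤ (s : ℝ) * k * ((s : ℝ) * k) + n * ((s : ℝ) * k * t) := by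
          rw [Finset.sum_add_sum_compl S (fun x => (w x : ℝ) ^ 2)]
          exact rw3
        have hKpos : (0 : ℝ) < (k : ℝ) := by exact_mod_cast hkpos
        have hNK : (0 : ℝ) < ((n : ℝ) ^ 2 + n + 1) - k := by
          have : (k : ℝ) < ((n : ℝ) ^ 2 + n + 1) := by exact_mod_cast hkN
          linarith
        have e1 := mul_le_mul_of_nonneg_left cs1 hNK.le
        have e2 := mul_le_mul_of_nonneg_left cs2 hKpos.le
        have e3' := mul_le_mul_of_nonneg_left e3 (mul_nonneg hKpos.le hNK.le)
        have key : (((n : ℝ) ^ 2 + n + 1) - k) * ((s : ℝ) * k * t) ^ 2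
            + (k : ℝ) * ((s : ℝ) * k * (n + 1) - (s : ℝ) * k * t) ^ 2
            ≤ (k : ℝ) * (((n : ℝ) ^ 2 + n + 1) - k)
              * ((s : ℝ) * k * ((s : ℝ) * k) + n * ((s : ℝ) * k * t)) := by
          nlinarith [e1, e2, e3']
        have hsK2 : (0 : ℝ) < (s : ℝ) * (k : ℝ) ^ 2 := by
          have hsR : (0 : ℝ) < (s : ℝ) := by exact_mod_cast hs
          positivity
        have hfin : (s : ℝ) * (k : ℝ) ^ 2 *
            ((s : ℝ) * (k : ℝ) ^ 2
              - (2 * s * t * ((n : ℝ) + 1) - ((s : ℝ) + t) * n) * k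
              - t * ((n : ℝ) - s * t) * ((n : ℝ) ^ 2 + n + 1)) ≤ 0 := by linarith [key]
        have := le_of_mul_le_mul_left (by linarith [hfin] :
            (s : ℝ) * (k : ℝ) ^ 2 * ((s : ℝ) * (k : ℝ) ^ 2
              - (2 * s * t * ((n : ℝ) + 1) - ((s : ℝ) + t) * n) * k
              - t * ((n : ℝ) - s * t) * ((n : ℝ) ^ 2 + n + 1))
            ≤ (s : ℝ) * (k : ℝ) ^ 2 * 0) hsK2
        linarith [this]
  refine ⟨hmain, ?_⟩
  have hspos : (0:ℝ) < s := by exact_mod_cast hs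
  exact quad_root_bound _ _ _ _ hspos hCnn hmain
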